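/- Let (F, G) be a Frobenius pair between abelian categories with enough projectives, and assume F is a separable functor. If the class of Gorenstein projective objects is precovering in D, then the class of Gorenstein projective objects is precovering in C. -/

import Mathlib

open CategoryTheory Limits

/-- An object `M` of an abelian category is *Gorenstein projective* if it is a syzygy
(the kernel `ker(P⁰ → P¹)`) of an acyclic complex `P` of projective objects such that
`Hom(P, Q)` is acyclic for every projective `Q`. -/
def IsGorensteinProjective {A : Type*} [Category A] [Abelian A] (M : A) : Prop :=
  ∃ P : CochainComplex A ℤ,
    (∀ n : ℤ, Projective (P.X n)) ∧
    (∀ n : ℤ, P.ExactAt n) ∧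
    Nonempty (M ≅ P.cycles 0) ∧
    ∀ (Q : A), Projective Q → ∀ (n : ℤ) (f : P.X n ⟶ Q), P.d (n - 1) n ≫ f = 0 →
      ∃ g : P.X (n + 1) ⟶ Q, P.d n (n + 1) ≫ g = f

/-- `φ : X ⟶ M` is an `𝒳`-precover of `M` if `X ∈ 𝒳` and every morphism from an object
of `𝒳` to `M` factors through `φ`. -/
def IsPrecover {A : Type*} [Category A] (𝒳 : A → Prop) {X M : A} (φ : X ⟶ M) : Prop :=
  𝒳 X ∧ ∀ (X' : A), 𝒳 X' → ∀ f : X' ⟶ M, ∃ g : X' ⟶ X, g ≫ φ = f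

section Aux

variable {C D : Type*} [Category C] [Category D] [Abelian C] [Abelian D]

/-- The short complex at `n` of a mapped complex. -/
noncomputable def mapScIso (F : C ⥤ D) [F.Additive] (P : CochainComplex C ℤ) (n : ℤ) :
    ((F.mapHomologicalComplex (ComplexShape.up ℤ)).obj P).sc n ≅ (P.sc n).map F :=
  ShortComplex.isoMk (Iso.refl _) (Iso.refl _) (Iso.refl _) (by simp; exact (Category.id_comp _).trans (Category.comp_id _).symm)
    (by simp; exact (Category.id_comp _).trans (Category.comp_id _).symm)

/-- A functor which is part of a Frobenius pair preserves Gorenstein projective objects. -/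
lemma isGorensteinProjective_map (F : C ⥤ D) (G : D ⥤ C) [F.Additive] [G.Additive]
    (adj₁ : F ⊣ G) (adj₂ : G ⊣ F) {M : C} (hM : IsGorensteinProjective M) :
    IsGorensteinProjective (F.obj M) := by
  obtain ⟨P, hproj, hexact, ⟨e⟩, hlift⟩ := hM
  have hGepi : G.PreservesEpimorphisms := Functor.preservesEpimorphisms_of_adjunction adj₂
  have hFepi : F.PreservesEpimorphisms := Functor.preservesEpimorphisms_of_adjunction adj₁
  have h1 : PreservesLimitsOfSize.{0, 0} F := adj₂.rightAdjoint_preservesLimits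
  have h2 : PreservesColimitsOfSize.{0, 0} F := adj₁.leftAdjoint_preservesColimits
  have h3 : PreservesFiniteLimits F := by infer_instance
  have h4 : PreservesFiniteColimits F := by infer_instance
  have scIso : ∀ n : ℤ, ((F.mapHomologicalComplex (ComplexShape.up ℤ)).obj P).sc n ≅
      (P.sc n).map F := fun n => mapScIso F P n
  refine ⟨(F.mapHomologicalComplex (ComplexShape.up ℤ)).obj P, fun n => adj₁.map_projective _ (hproj n), fun n => ?_, ?_, ?_⟩
  · rw [HomologicalComplex.exactAt_iff]
    exact ShortComplex.exact_of_iso (scIso n).symm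
      (((HomologicalComplex.exactAt_iff _ _).mp (hexact n)).map F)
  · exact ⟨F.mapIso e ≪≫ ((P.sc 0).mapCyclesIso F).symm ≪≫
      (ShortComplex.cyclesMapIso (scIso 0).symm : _)⟩
  · intro Q hQ n (f : F.obj (P.X n) ⟶ Q) hf
    have hGQ : Projective (G.obj Q) := adj₂.map_projective _ hQ
    have hf2 : F.map (P.d (n - 1) n) ≫ f = 0 := hf
    have hf' : P.d (n - 1) n ≫ adj₁.homEquiv _ _ f = 0 := by
      rw [← adj₁.homEquiv_naturality_left, hf2]
      simp [Adjunction.homEquiv_unit]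
    obtain ⟨g', hg'⟩ := hlift (G.obj Q) hGQ n (adj₁.homEquiv _ _ f) hf'
    refine ⟨(adj₁.homEquiv _ _).symm g', ?_⟩
    show F.map (P.d n (n + 1)) ≫ _ = f
    rw [← adj₁.homEquiv_naturality_left_symm, hg', Equiv.symm_apply_apply]

end Aux

/-- If `(F, G)` is a Frobenius pair between abelian categories with enough projectives,
`F` is separable (the unit of `F ⊣ G` has a natural retraction), and the Gorenstein
projective objects are precovering in `D`, then they are precovering in `C`. -/
theorem gp_precovering_of_separable_left {C D : Type*} [Category C] [Category D]
    [Abelian C] [Abelian D] [EnoughProjectives C] [EnoughProjectives D]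
    (F : C ⥤ D) (G : D ⥤ C) [F.Additive] [G.Additive]
    (adj₁ : F ⊣ G) (adj₂ : G ⊣ F)
    (hsep : ∃ ψ : F ⋙ G ⟶ 𝟭 C, adj₁.unit ≫ ψ = 𝟙 (𝟭 C))
    (hD : ∀ N : D, ∃ (Y : D) (φ : Y ⟶ N), IsPrecover (IsGorensteinProjective (A := D)) φ) :
    ∀ M : C, ∃ (X : C) (φ : X ⟶ M), IsPrecover (IsGorensteinProjective (A := C)) φ := by
  obtain ⟨ψ, hψ⟩ := hsep
  intro M
  obtain ⟨Y, φ, hY, hfac⟩ := hD (F.obj M)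
  refine ⟨G.obj Y, G.map φ ≫ ψ.app M, isGorensteinProjective_map G F adj₂ adj₁ hY, ?_⟩
  intro X' hX' f
  obtain ⟨g, hg⟩ := hfac (F.obj X') (isGorensteinProjective_map F G adj₁ adj₂ hX') (F.map f)
  refine ⟨adj₁.unit.app X' ≫ G.map g, ?_⟩
  have h1 : adj₁.unit.app X' ≫ G.map (F.map f) = f ≫ adj₁.unit.app M :=
    (adj₁.unit.naturality f).symm
  have h2 : adj₁.unit.app M ≫ ψ.app M = 𝟙 M := congrFun (congrArg NatTrans.app hψ) M
  calc (adj₁.unit.app X' ≫ G.map g) ≫ G.map φ ≫ ψ.app M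
      = adj₁.unit.app X' ≫ G.map (g ≫ φ) ≫ ψ.app M := by simp
    _ = adj₁.unit.app X' ≫ G.map (F.map f) ≫ ψ.app M := by rw [hg]
    _ = f := by rw [← Category.assoc, h1, Category.assoc, h2, Category.comp_id]
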